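/- arXiv:1210.8052 — 2 statements merged into one kernel-verified Lean document; each statement's English description precedes it below -/
import Mathlib

section
/- Let A be an algebra over a commutative ring k, and let M be a right comodule over the Sweedler coring A⊗A, with coaction ρ(m) = m_{[0]} ⊗ m_{[1]} ∈ M ⊗ A satisfying the counit axiom m_{[0]} m_{[1]} = m, the coassociativity axiom ρ(m_{[0]}) ⊗ m_{[1]} = m_{[0]} ⊗ 1 ⊗ m_{[1]}, and right A-linearity ρ(ma) = m_{[0]} ⊗ m_{[1]} a. Then the formula a · m := m_{[0]} a m_{[1]} defines a left A-module structure on M. -/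
open TensorProduct

/-- A right comodule over the Sweedler canonical coring `A ⊗ A` of a `k`-algebra `A`:
a right `A`-module `M` (action `act`) with a `k`-linear coaction `rho : M → M ⊗ A`
satisfying the counit, coassociativity and right `A`-linearity axioms. -/
structure SweedlerComodule (k A M : Type*) [CommRing k] [Ring A] [Algebra k A]
    [AddCommGroup M] [Module k M] where
  act : M →ₗ[k] A →ₗ[k] M
  act_one : ∀ m : M, act m 1 = m
  act_mul : ∀ (m : M) (a b : A), act (act m a) b = act m (a * b)
  rho : M →ₗ[k] M ⊗[k] A
  counit : ∀ m : M, TensorProduct.lift act (rho m) = m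
  coassoc : ∀ m : M,
    (TensorProduct.assoc k M A A) ((TensorProduct.map rho LinearMap.id) (rho m)) =
      (TensorProduct.map LinearMap.id (TensorProduct.mk k A A 1)) (rho m)
  rho_act : ∀ (m : M) (a : A),
    rho (act m a) = (TensorProduct.map LinearMap.id (LinearMap.mulRight k a)) (rho m)

namespace SweedlerComodule

variable {k A : Type*} [CommRing k] [Ring A] [Algebra k A]
variable {M N : Type*} [AddCommGroup M] [Module k M] [AddCommGroup N] [Module k N]

/-- The induced left `A`-action `a · m = m₍₀₎ a m₍₁₎` on a Sweedler comodule. -/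
noncomputable def lAct (S : SweedlerComodule k A M) (a : A) : M →ₗ[k] M :=
  TensorProduct.lift S.act ∘ₗ TensorProduct.map (S.act.flip a) LinearMap.id ∘ₗ S.rho


lemma rho_lAct (S : SweedlerComodule k A M) (b : A) (m : M) :
    S.rho (S.lAct b m) =
      TensorProduct.map LinearMap.id (LinearMap.mulLeft k b) (S.rho m) := by
  set μ : A ⊗[k] A →ₗ[k] A :=
    (LinearMap.mul' k A) ∘ₗ TensorProduct.map (LinearMap.mulRight k b) LinearMap.id with hμ
  set Φ : M ⊗[k] (A ⊗[k] A) →ₗ[k] M ⊗[k] A :=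
    TensorProduct.map LinearMap.id μ with hΦ
  have key : ∀ t : M ⊗[k] A,
      S.rho (TensorProduct.lift S.act (TensorProduct.map (S.act.flip b) LinearMap.id t)) =
      Φ ((TensorProduct.assoc k M A A) ((TensorProduct.map S.rho LinearMap.id) t)) := by
    intro t
    induction t using TensorProduct.induction_on with
    | zero => simp
    | add x y hx hy => simp [map_add, hx, hy]
    | tmul x c =>
      simp only [TensorProduct.map_tmul, LinearMap.id_coe, id_eq, TensorProduct.lift.tmul,
        LinearMap.flip_apply]
      rw [S.rho_act, S.rho_act]
      induction S.rho x using TensorProduct.induction_on with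
      | zero => simp
      | add u v hu hv => simp [map_add, TensorProduct.add_tmul, hu, hv]
      | tmul y u =>
        simp [hΦ, hμ, mul_assoc]
  have h2 : ∀ t : M ⊗[k] A,
      Φ ((TensorProduct.map LinearMap.id (TensorProduct.mk k A A 1)) t) =
      TensorProduct.map LinearMap.id (LinearMap.mulLeft k b) t := by
    intro t
    induction t using TensorProduct.induction_on with
    | zero => simp
    | add x y hx hy => simp [map_add, hx, hy]
    | tmul x c => simp [hΦ, hμ]
  calc S.rho (S.lAct b m)
      = Φ ((TensorProduct.assoc k M A A) ((TensorProduct.map S.rho LinearMap.id) (S.rho m))) := by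
        simpa [lAct] using key (S.rho m)
    _ = Φ ((TensorProduct.map LinearMap.id (TensorProduct.mk k A A 1)) (S.rho m)) := by
        rw [S.coassoc]
    _ = TensorProduct.map LinearMap.id (LinearMap.mulLeft k b) (S.rho m) := h2 (S.rho m)

/-- `a · m := m₍₀₎ a m₍₁₎` defines a left `A`-module structure on `M`. -/
theorem lAct_isLeftModule (S : SweedlerComodule k A M) :
    (∀ m : M, S.lAct 1 m = m) ∧
    (∀ (a b : A) (m : M), S.lAct (a * b) m = S.lAct a (S.lAct b m)) ∧
    (∀ (a b : A) (m : M), S.lAct (a + b) m = S.lAct a m + S.lAct b m) ∧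
    (∀ m : M, S.lAct (0 : A) m = 0) ∧
    (∀ (a : A) (m m' : M), S.lAct a (m + m') = S.lAct a m + S.lAct a m') ∧
    (∀ a : A, S.lAct a (0 : M) = 0) ∧
    (∀ (a : A) (r : k) (m : M), S.lAct a (r • m) = r • S.lAct a m) := by
  refine ⟨?_, ?_, ?_, ?_, ?_, ?_, ?_⟩
  · -- one_smul
    intro m
    have h : TensorProduct.map (S.act.flip (1 : A)) LinearMap.id (S.rho m) = S.rho m := by
      induction S.rho m using TensorProduct.induction_on with
      | zero => simp
      | add x y hx hy => simp [map_add, hx, hy]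
      | tmul x c => simp [S.act_one]
    simp only [lAct, LinearMap.comp_apply, h, S.counit]
  · -- mul_smul
    intro a b m
    have h : ∀ t : M ⊗[k] A,
        TensorProduct.lift S.act (TensorProduct.map (S.act.flip (a * b)) LinearMap.id t) =
        TensorProduct.lift S.act (TensorProduct.map (S.act.flip a) LinearMap.id
          (TensorProduct.map LinearMap.id (LinearMap.mulLeft k b) t)) := by
      intro t
      induction t using TensorProduct.induction_on with
      | zero => simp
      | add x y hx hy => simp [map_add, hx, hy]
      | tmul x c => simp [S.act_mul, mul_assoc]
    calc S.lAct (a * b) m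
        = TensorProduct.lift S.act (TensorProduct.map (S.act.flip (a * b)) LinearMap.id
            (S.rho m)) := rfl
      _ = TensorProduct.lift S.act (TensorProduct.map (S.act.flip a) LinearMap.id
            (TensorProduct.map LinearMap.id (LinearMap.mulLeft k b) (S.rho m))) := h _
      _ = TensorProduct.lift S.act (TensorProduct.map (S.act.flip a) LinearMap.id
            (S.rho (S.lAct b m))) := by rw [S.rho_lAct]
      _ = S.lAct a (S.lAct b m) := rfl
  · -- add_smul
    intro a b m
    simp [lAct, map_add, TensorProduct.map_add_left]
  · -- zero_smul
    intro m
    simp [lAct, TensorProduct.map_zero_left]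
  · intro a m m'; exact map_add _ _ _
  · intro a; exact map_zero _
  · intro a r m; exact map_smul _ _ _


end SweedlerComodule
end

section
/- Let A be a k-algebra and suppose E: A → Z(A) is a k-linear map into the center of A with E(1_A) = 1_A. For any right A⊗A-comodule M, the map μ^E_M: M ⊗ A → M defined by μ^E_M(m ⊗ a) = m_{[0]} E(m_{[1]}) a is left A-linear (with respect to the left A-action a · m = m_{[0]} a m_{[1]} on M and a · (m ⊗ b) = m ⊗ ab on M ⊗ A) and satisfies μ^E_M ∘ ρ = id_M. -/
open TensorProduct

namespace SweedlerComodule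

variable {k A : Type*} [CommRing k] [Ring A] [Algebra k A]
variable {M N : Type*} [AddCommGroup M] [Module k M] [AddCommGroup N] [Module k N]

/-- if `E : A → Z(A)` is `k`-linear and unitary, then
`μ^E_M(m ⊗ a) = m₍₀₎ E(m₍₁₎) a` is a left `A`-linear splitting of the coaction. -/
theorem muE_left_linear_splitting (S : SweedlerComodule k A M) (E : A →ₗ[k] A)
    (hEc : ∀ a : A, E a ∈ Set.center A) (hE1 : E 1 = 1) :
    ∀ muE : M ⊗[k] A →ₗ[k] M,
      muE = TensorProduct.lift (S.act ∘ₗ TensorProduct.lift S.act ∘ₗ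
          TensorProduct.map LinearMap.id E ∘ₗ S.rho) →
      (∀ m : M, muE (S.rho m) = m) ∧
      (∀ (a : A) (x : M ⊗[k] A),
        muE ((TensorProduct.map LinearMap.id (LinearMap.mulLeft k a)) x) =
          S.lAct a (muE x)) := by
  intro muE hmu
  subst hmu
  have hE' : ∀ x y : A, E x * y = y * E x := fun x y => (hEc x).comm y
  -- Q m = m₀ E(m₁)
  set Q : M →ₗ[k] M :=
    TensorProduct.lift S.act ∘ₗ TensorProduct.map LinearMap.id E ∘ₗ S.rho with hQdef
  have hmuE : ∀ (m : M) (c : A),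
      TensorProduct.lift (S.act ∘ₗ TensorProduct.lift S.act ∘ₗ
          TensorProduct.map LinearMap.id E ∘ₗ S.rho) (m ⊗ₜ[k] c) = S.act (Q m) c := by
    intro m c; simp [hQdef]
  -- ρ (Q m) = (id ⊗ E) (ρ m)
  have hrho_lift : ∀ t : M ⊗[k] A,
      S.rho (TensorProduct.lift S.act t) =
        TensorProduct.map LinearMap.id (LinearMap.mul' k A)
          ((TensorProduct.assoc k M A A)
            ((TensorProduct.map S.rho LinearMap.id) t)) := by
    intro t
    induction t using TensorProduct.induction_on with
    | zero => simp
    | add x y hx hy => simp [map_add, hx, hy]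
    | tmul m c =>
      rw [TensorProduct.lift.tmul, S.rho_act, TensorProduct.map_tmul]
      induction (S.rho m) using TensorProduct.induction_on with
      | zero => simp
      | add x y hx hy => simp [TensorProduct.add_tmul, map_add, hx, hy]
      | tmul m' x => simp
  have hQrho : ∀ m : M,
      S.rho (Q m) = TensorProduct.map LinearMap.id E (S.rho m) := by
    intro m
    have h1 : S.rho (Q m) =
        TensorProduct.map LinearMap.id (LinearMap.mul' k A)
          ((TensorProduct.assoc k M A A)
            ((TensorProduct.map S.rho LinearMap.id)
              (TensorProduct.map LinearMap.id E (S.rho m)))) := by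
      simp only [hQdef, LinearMap.comp_apply]
      exact hrho_lift _
    have h2 : ∀ X : (M ⊗[k] A) ⊗[k] A,
        TensorProduct.map LinearMap.id (LinearMap.mul' k A)
          ((TensorProduct.assoc k M A A)
            (TensorProduct.map LinearMap.id E X)) =
        TensorProduct.map LinearMap.id
            (LinearMap.mul' k A ∘ₗ TensorProduct.map LinearMap.id E)
          ((TensorProduct.assoc k M A A) X) := by
      have := TensorProduct.ext_threefold (R := k)
        (g := (TensorProduct.map LinearMap.id (LinearMap.mul' k A)) ∘ₗ
          (TensorProduct.assoc k M A A).toLinearMap ∘ₗ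
          TensorProduct.map (LinearMap.id : M ⊗[k] A →ₗ[k] M ⊗[k] A) E)
        (h := (TensorProduct.map LinearMap.id
            (LinearMap.mul' k A ∘ₗ TensorProduct.map LinearMap.id E)) ∘ₗ
          (TensorProduct.assoc k M A A).toLinearMap)
        (by intro x y z; simp)
      intro X
      exact DFunLike.congr_fun this X
    have h3 : (TensorProduct.map S.rho LinearMap.id)
          (TensorProduct.map LinearMap.id E (S.rho m)) =
        TensorProduct.map (LinearMap.id : M ⊗[k] A →ₗ[k] M ⊗[k] A) E
          ((TensorProduct.map S.rho LinearMap.id) (S.rho m)) := by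
      have : TensorProduct.map S.rho LinearMap.id ∘ₗ
          TensorProduct.map (LinearMap.id : M →ₗ[k] M) E =
          TensorProduct.map (LinearMap.id : M ⊗[k] A →ₗ[k] M ⊗[k] A) E ∘ₗ
          TensorProduct.map S.rho LinearMap.id := by
        apply TensorProduct.ext'
        intro m' c; simp
      exact DFunLike.congr_fun this (S.rho m)
    rw [h1, h3, h2, S.coassoc]
    have h4 : ∀ t : M ⊗[k] A,
        TensorProduct.map LinearMap.id
            (LinearMap.mul' k A ∘ₗ TensorProduct.map LinearMap.id E)
          ((TensorProduct.map LinearMap.id (TensorProduct.mk k A A 1)) t) =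
        TensorProduct.map LinearMap.id E t := by
      intro t
      induction t using TensorProduct.induction_on with
      | zero => simp
      | add x y hx hy => simp [map_add, hx, hy]
      | tmul m' c => simp
    exact h4 _
  constructor
  · -- splitting
    intro m
    -- μ (ρ m) = Σ act (Q m₀) m₁
    have hμρ : ∀ t : M ⊗[k] A,
        TensorProduct.lift (S.act ∘ₗ TensorProduct.lift S.act ∘ₗ
            TensorProduct.map LinearMap.id E ∘ₗ S.rho) t =
          TensorProduct.lift S.act (TensorProduct.map Q LinearMap.id t) := by
      intro t
      induction t using TensorProduct.induction_on with
      | zero => simp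
      | add x y hx hy => simp [map_add, hx, hy]
      | tmul m' c => rw [hmuE]; simp
    rw [hμρ]
    -- now use ρ (Q m₀) and counit... instead: act (Q m₀) m₁ via coassoc
    have key : ∀ t : M ⊗[k] A,
        TensorProduct.lift S.act (TensorProduct.map Q LinearMap.id t) =
          (TensorProduct.lift S.act ∘ₗ
            TensorProduct.map LinearMap.id
              (LinearMap.mul' k A ∘ₗ TensorProduct.map E LinearMap.id))
            ((TensorProduct.assoc k M A A)
              ((TensorProduct.map S.rho LinearMap.id) t)) := by
      intro t
      induction t using TensorProduct.induction_on with
      | zero => simp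
      | add x y hx hy => simp [map_add, hx, hy]
      | tmul m' c =>
        simp only [TensorProduct.map_tmul, LinearMap.id_coe, id_eq,
          TensorProduct.lift.tmul, hQdef, LinearMap.comp_apply]
        induction (S.rho m') using TensorProduct.induction_on with
        | zero => simp
        | add x y hx hy =>
          simp only [map_add, TensorProduct.add_tmul, LinearMap.add_apply,
            LinearMap.map_add] at hx hy ⊢
          rw [hx, hy]
        | tmul m'' x =>
          simp [S.act_mul]
    rw [key, LinearMap.comp_apply, S.coassoc]
    have last : ∀ t : M ⊗[k] A,
        TensorProduct.lift S.act
          (TensorProduct.map LinearMap.id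
              (LinearMap.mul' k A ∘ₗ TensorProduct.map E LinearMap.id)
            ((TensorProduct.map LinearMap.id (TensorProduct.mk k A A 1)) t)) =
        TensorProduct.lift S.act t := by
      intro t
      induction t using TensorProduct.induction_on with
      | zero => simp
      | add x y hx hy => simp [map_add, hx, hy]
      | tmul m' c => simp [hE1]
    rw [last, S.counit]
  · -- left A-linearity
    intro a x
    induction x using TensorProduct.induction_on with
    | zero => simp
    | add x y hx hy => simp only [map_add, hx, hy]
    | tmul m b =>
      rw [TensorProduct.map_tmul, LinearMap.id_coe, id_eq, LinearMap.mulLeft_apply,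
        hmuE, hmuE]
      -- RHS: lAct a (act (Q m) b)
      simp only [lAct, LinearMap.comp_apply]
      rw [S.rho_act, hQrho]
      -- both sides as functions of ρ m
      have : ∀ t : M ⊗[k] A,
          S.act (TensorProduct.lift S.act (TensorProduct.map LinearMap.id E t))
              (a * b) =
          TensorProduct.lift S.act
            (TensorProduct.map (S.act.flip a) LinearMap.id
              (TensorProduct.map LinearMap.id (LinearMap.mulRight k b)
                (TensorProduct.map LinearMap.id E t))) := by
        intro t
        induction t using TensorProduct.induction_on with
        | zero => simp
        | add x y hx hy =>
          simp only [map_add, LinearMap.map_add, LinearMap.add_apply, hx, hy]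
        | tmul m' c =>
          simp only [TensorProduct.map_tmul, LinearMap.id_coe, id_eq,
            TensorProduct.lift.tmul, LinearMap.mulRight_apply, LinearMap.flip_apply]
          rw [S.act_mul, S.act_mul]
          congr 1
          rw [← mul_assoc, hE' c a, mul_assoc]
      simp only [hQdef, LinearMap.comp_apply]
      rw [this (S.rho m)]

end SweedlerComodule
end
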